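/- arXiv:2002.06795 — 7 statements merged into one kernel-verified Lean document; each statement's English description precedes it below -/
import Mathlib

section
/- Let p be a prime with p ≡ 5 (mod 6) and p > 11. Then every vertex of the graph G_p has degree at least (p − 11)/6. -/
open SimpleGraph

/-- The set `S ⊆ 𝔽_p` of residues of the integers `1, …, (p-5)/6`. -/
def Sset (p : ℕ) : Finset (ZMod p) :=
  (Finset.Icc 1 ((p - 5) / 6)).image (fun k : ℕ => (k : ZMod p))

/-- The vertex set `V = S × 𝔽_p × 𝔽_p`. -/
abbrev Vert (p : ℕ) : Type := {v : ZMod p × ZMod p × ZMod p // v.1 ∈ Sset p}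

/-- The graph `G_p`: distinct vertices `x = (x₁,x₂,x₃)` and `y = (y₁,y₂,y₃)` are adjacent
iff `x₂ + y₃ = x₁y₁²` and `x₃ + y₂ = x₁²y₁`. -/
def Gp (p : ℕ) : SimpleGraph (Vert p) where
  Adj x y := x ≠ y ∧
    x.val.2.1 + y.val.2.2 = x.val.1 * y.val.1 ^ 2 ∧
    x.val.2.2 + y.val.2.1 = x.val.1 ^ 2 * y.val.1
  symm := ⟨by
    rintro x y ⟨hne, h1, h2⟩
    exact ⟨hne.symm, by linear_combination h2, by linear_combination h1⟩⟩
  loopless := ⟨fun x h => h.1 rfl⟩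

instance (p : ℕ) : DecidableRel (Gp p).Adj := fun x y =>
  decidable_of_iff (x ≠ y ∧
    x.val.2.1 + y.val.2.2 = x.val.1 * y.val.1 ^ 2 ∧
    x.val.2.2 + y.val.2.1 = x.val.1 ^ 2 * y.val.1) Iff.rfl

/-- Every vertex of `G_p` has degree at least `(p - 11)/6`. -/
theorem Gp_degree_lower (p : ℕ) [Fact p.Prime] (h5 : p % 6 = 5) (h11 : 11 < p)
    (v : Vert p) : (p - 11) / 6 ≤ (Gp p).degree v := by
  classical
  set a : ZMod p := v.val.1 with ha
  set T : Finset (ZMod p) := (Sset p).erase a with hT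
  -- the map sending b ∈ T to a neighbor of v
  have hTsub : T ⊆ Sset p := Finset.erase_subset _ _
  let f : {b // b ∈ T} → Vert p := fun b =>
    ⟨(b.val, a ^ 2 * b.val - v.val.2.2, a * b.val ^ 2 - v.val.2.1),
      hTsub b.property⟩
  have hfinj : Function.Injective f := by
    intro b c h
    have : b.val = c.val := congrArg (fun z : Vert p => z.val.1) h
    exact Subtype.ext this
  have hmem : ∀ b : {x // x ∈ T}, f b ∈ (Gp p).neighborFinset v := by
    intro b
    rw [SimpleGraph.mem_neighborFinset]
    refine ⟨?_, by ring, by ring⟩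
    intro hv
    have : v.val.1 = b.val := congrArg (fun z : Vert p => z.val.1) hv
    exact (Finset.ne_of_mem_erase b.property) this.symm
  have hcard : T.card ≤ (Gp p).degree v := by
    rw [← SimpleGraph.card_neighborFinset_eq_degree]
    have : T.attach.card ≤ ((Gp p).neighborFinset v).card :=
      Finset.card_le_card_of_injOn f (fun b _ => hmem b)
        (fun b _ c _ h => hfinj h)
    simpa using this
  have hS : (Sset p).card = (p - 5) / 6 := by
    unfold Sset
    rw [Finset.card_image_of_injOn, Nat.card_Icc]
    · omega
    · intro x hx y hy hxy
      simp only [Finset.coe_Icc, Set.mem_Icc] at hx hy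
      have hxp : x < p := by omega
      have hyp : y < p := by omega
      have := congrArg ZMod.val hxy
      rwa [ZMod.val_natCast_of_lt hxp, ZMod.val_natCast_of_lt hyp] at this
  have hTcard : (p - 5) / 6 - 1 ≤ T.card := by
    rw [hT]
    have := Finset.pred_card_le_card_erase (a := a) (s := Sset p)
    omega
  omega
end

section
/- Let p be a prime with p ≡ 5 (mod 6) and p > 11. Then the graph G_p has exactly (p−5)p²/6 vertices and at least (p−5)(p−11)p²/72 edges. -/
open SimpleGraph

lemma card_Sset (p : ℕ) [Fact p.Prime] : (Sset p).card = (p - 5) / 6 := by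
  have hp : 0 < p := (Fact.out : p.Prime).pos
  rw [Sset, Finset.card_image_of_injOn, Nat.card_Icc]
  · simp
  · intro a ha b hb hab
    simp only [Finset.coe_Icc, Set.mem_Icc] at ha hb
    have hap : a < p := lt_of_le_of_lt ha.2 (lt_of_le_of_lt (Nat.div_le_self _ _) (by omega))
    have hbp : b < p := lt_of_le_of_lt hb.2 (lt_of_le_of_lt (Nat.div_le_self _ _) (by omega))
    haveI : NeZero p := ⟨hp.ne'⟩
    have := congrArg ZMod.val hab
    rwa [ZMod.val_natCast_of_lt hap, ZMod.val_natCast_of_lt hbp] at this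

def vertEquiv (p : ℕ) : Vert p ≃ {a : ZMod p // a ∈ Sset p} × (ZMod p × ZMod p) where
  toFun v := (⟨v.1.1, v.2⟩, v.1.2)
  invFun w := ⟨(w.1.1, w.2), w.1.2⟩
  left_inv _ := rfl
  right_inv _ := rfl

lemma card_Vert (p : ℕ) [Fact p.Prime] :
    Fintype.card (Vert p) = ((p - 5) / 6) * p ^ 2 := by
  rw [Fintype.card_congr (vertEquiv p), Fintype.card_prod, Fintype.card_prod,
    Fintype.card_coe, card_Sset, ZMod.card]
  ring

lemma deg_lb (p : ℕ) [Fact p.Prime] (x : Vert p) :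
    (Sset p).card - 1 ≤ (Gp p).degree x := by
  classical
  set a := x.val.1 with ha_def
  have ha : a ∈ Sset p := x.2
  have key : (((Sset p).erase a).attach).card ≤ ((Gp p).neighborFinset x).card := by
    apply Finset.card_le_card_of_injOn
      (fun b => (⟨(b.1, a ^ 2 * b.1 - x.val.2.2, a * b.1 ^ 2 - x.val.2.1),
        Finset.mem_of_mem_erase b.2⟩ : Vert p))
    · intro b _
      rw [Finset.mem_coe, SimpleGraph.mem_neighborFinset]
      refine ⟨?_, by ring, by ring⟩
      intro h
      have : x.val.1 = b.1 := by rw [h]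
      exact (Finset.ne_of_mem_erase b.2) this.symm
    · intro b _ c _ h
      have : b.1 = c.1 := congrArg (fun v : Vert p => v.val.1) h
      exact Subtype.ext this
  rwa [Finset.card_attach, Finset.card_erase_of_mem ha] at key

/-- `G_p` has exactly `(p-5)p²/6` vertices and at least `(p-5)(p-11)p²/72` edges. -/
theorem Gp_card_edges (p : ℕ) [Fact p.Prime] (h5 : p % 6 = 5) (h11 : 11 < p) :
    Fintype.card (Vert p) = (p - 5) * p ^ 2 / 6 ∧
    (p - 5) * (p - 11) * p ^ 2 / 72 ≤ (Gp p).edgeFinset.card := by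
  classical
  have hm : p - 5 = 6 * ((p - 5) / 6) := by omega
  constructor
  · rw [card_Vert]
    conv_rhs => rw [hm]
    rw [mul_assoc, Nat.mul_div_cancel_left _ (by norm_num : (0:ℕ) < 6)]
  · obtain ⟨m, hmdef⟩ : ∃ m, (p - 5) / 6 = m := ⟨_, rfl⟩
    have hm6 : p - 5 = 6 * m := by omega
    have hm2 : 2 ≤ m := by omega
    obtain ⟨n, hn⟩ : ∃ n, m = n + 1 := ⟨m - 1, by omega⟩
    have h11' : p - 11 = 6 * n := by omega
    obtain ⟨k, hk⟩ := Nat.even_mul_succ_self n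
    have hsum := (Gp p).sum_degrees_eq_twice_card_edges
    have hlb : Fintype.card (Vert p) * ((Sset p).card - 1) ≤ 2 * (Gp p).edgeFinset.card := by
      rw [← hsum]
      calc Fintype.card (Vert p) * ((Sset p).card - 1)
          = Finset.univ.card • ((Sset p).card - 1) := by rw [Finset.card_univ, smul_eq_mul]
        _ ≤ ∑ v, (Gp p).degree v := Finset.card_nsmul_le_sum _ _ _ (fun v _ => deg_lb p v)
    rw [card_Vert, card_Sset, hmdef] at hlb
    have key : 2 * (k * p ^ 2) ≤ 2 * (Gp p).edgeFinset.card := by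
      calc 2 * (k * p ^ 2) = (n * (n + 1)) * p ^ 2 := by
            rw [show n * (n + 1) = 2 * k from by omega]; ring
        _ = m * p ^ 2 * (m - 1) := by
            rw [show m - 1 = n from by omega, hn]; ring
        _ ≤ _ := hlb
    have he : k * p ^ 2 ≤ (Gp p).edgeFinset.card := by omega
    calc (p - 5) * (p - 11) * p ^ 2 / 72
        = 72 * (k * p ^ 2) / 72 := by
          rw [hm6, h11', hn]
          congr 1
          have h1 : 6 * (n + 1) * (6 * n) * p ^ 2 = 36 * (n * (n + 1)) * p ^ 2 := by ring
          rw [h1, show n * (n + 1) = 2 * k from by omega]; ring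
      _ = k * p ^ 2 := Nat.mul_div_cancel_left _ (by norm_num)
      _ ≤ _ := he
end

section
/- Let p be a prime with p ≡ 5 (mod 6) and p > 11. If x = (x₁,x₂,x₃) and y = (y₁,y₂,y₃) are distinct vertices of G_p that have a common neighbor, then x₁ ≠ y₁, x₂ ≠ y₂, and x₃ ≠ y₃. -/
open SimpleGraph

lemma Sset_lt {p : ℕ} (h5 : p % 6 = 5) {a : ZMod p} (ha : a ∈ Sset p) :
    ∃ k : ℕ, 1 ≤ k ∧ 6 * k + 5 ≤ p ∧ a = (k : ZMod p) := by
  obtain ⟨k, hk, rfl⟩ := Finset.mem_image.mp ha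
  rw [Finset.mem_Icc] at hk
  exact ⟨k, hk.1, by omega, rfl⟩

lemma Sset_ne_zero {p : ℕ} [Fact p.Prime] (h5 : p % 6 = 5) {a : ZMod p}
    (ha : a ∈ Sset p) : a ≠ 0 := by
  obtain ⟨k, hk1, hk2, rfl⟩ := Sset_lt h5 ha
  rw [Ne, ZMod.natCast_eq_zero_iff]
  intro hd
  have := Nat.le_of_dvd (by omega) hd
  omega

lemma Sset_add_ne_zero {p : ℕ} [Fact p.Prime] (h5 : p % 6 = 5) {a b : ZMod p}
    (ha : a ∈ Sset p) (hb : b ∈ Sset p) : a + b ≠ 0 := by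
  obtain ⟨k, hk1, hk2, rfl⟩ := Sset_lt h5 ha
  obtain ⟨l, hl1, hl2, rfl⟩ := Sset_lt h5 hb
  rw [← Nat.cast_add, Ne, ZMod.natCast_eq_zero_iff]
  intro hd
  have := Nat.le_of_dvd (by omega) hd
  omega

/-- Distinct vertices of `G_p` with a common neighbor differ in every coordinate. -/
theorem Gp_common_neighbor_coords (p : ℕ) [Fact p.Prime] (h5 : p % 6 = 5) (h11 : 11 < p)
    (x y : Vert p) (hxy : x ≠ y)
    (h : ∃ u : Vert p, (Gp p).Adj x u ∧ (Gp p).Adj y u) :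
    x.val.1 ≠ y.val.1 ∧ x.val.2.1 ≠ y.val.2.1 ∧ x.val.2.2 ≠ y.val.2.2 := by
  obtain ⟨u, ⟨-, hx1, hx2⟩, ⟨-, hy1, hy2⟩⟩ := h
  have hu1 : u.val.1 ≠ 0 := Sset_ne_zero h5 u.property
  have h1 : x.val.1 ≠ y.val.1 := by
    intro heq
    apply hxy
    have e2 : x.val.2.1 = y.val.2.1 := by linear_combination hx1 - hy1 + u.val.1 ^ 2 * heq
    have e3 : x.val.2.2 = y.val.2.2 := by
      linear_combination hx2 - hy2 + u.val.1 * (x.val.1 + y.val.1) * heq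
    exact Subtype.ext (Prod.ext heq (Prod.ext e2 e3))
  refine ⟨h1, ?_, ?_⟩
  · intro heq
    have : (x.val.1 - y.val.1) * u.val.1 ^ 2 = 0 := by linear_combination heq - hx1 + hy1
    rcases mul_eq_zero.mp this with h | h
    · exact h1 (by linear_combination h)
    · exact hu1 (pow_eq_zero_iff (n := 2) (by norm_num) |>.mp h)
  · intro heq
    have : (x.val.1 - y.val.1) * ((x.val.1 + y.val.1) * u.val.1) = 0 := by
      linear_combination heq - hx2 + hy2
    rcases mul_eq_zero.mp this with h | h
    · exact h1 (by linear_combination h)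
    · rcases mul_eq_zero.mp h with h | h
      · exact Sset_add_ne_zero h5 x.property y.property h
      · exact hu1 h
end

section
/- Let p be a prime with p ≡ 5 (mod 6) and p > 11. Let a = (a₁,a₂,a₃) and b = (b₁,b₂,b₃) be distinct vertices of G_p with a₁ = b₁, and suppose there exist vertices x, y, w of G_p with w ≠ a and w ≠ b such that ax, by, wx, and wy are all edges of G_p. Then a₂ ≠ b₂ and a₃ ≠ b₃. -/
open SimpleGraph

lemma Sset_sum_ne_zero {p : ℕ} [Fact p.Prime] (h11 : 11 < p) {s t : ZMod p}
    (hs : s ∈ Sset p) (ht : t ∈ Sset p) : s + t ≠ 0 := by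
  simp only [Sset, Finset.mem_image, Finset.mem_Icc] at hs ht
  obtain ⟨k, ⟨hk1, hk2⟩, rfl⟩ := hs
  obtain ⟨l, ⟨hl1, hl2⟩, rfl⟩ := ht
  have hd : (p - 5) / 6 * 6 ≤ p - 5 := Nat.div_mul_le_self _ _
  rw [← Nat.cast_add]
  intro h0
  rw [ZMod.natCast_eq_zero_iff] at h0
  have := Nat.le_of_dvd (by omega) h0
  omega

/-- If `a ≠ b`, `a₁ = b₁`, and there are vertices `x, y, w` with `w ≠ a`, `w ≠ b` such that
`ax, by, wx, wy` are edges of `G_p`, then `a₂ ≠ b₂` and `a₃ ≠ b₃`. -/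
theorem Gp_same_first_coord (p : ℕ) [Fact p.Prime] (h5 : p % 6 = 5) (h11 : 11 < p)
    (a b : Vert p) (hab : a ≠ b) (h1 : a.val.1 = b.val.1)
    (h : ∃ x y w : Vert p, w ≠ a ∧ w ≠ b ∧
      (Gp p).Adj a x ∧ (Gp p).Adj b y ∧ (Gp p).Adj w x ∧ (Gp p).Adj w y) :
    a.val.2.1 ≠ b.val.2.1 ∧ a.val.2.2 ≠ b.val.2.2 := by
  obtain ⟨x, y, w, hwa, hwb, ⟨_, e1, e2⟩, ⟨_, f1, f2⟩, ⟨_, g1, g2⟩, ⟨_, k1, k2⟩⟩ := h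
  -- case w₁ = a₁ is impossible
  have hw1 : w.val.1 ≠ a.val.1 := by
    intro hw1
    apply hwa
    apply Subtype.ext
    have h2 : w.val.2.1 = a.val.2.1 := by
      linear_combination g1 - e1 + x.val.1 ^ 2 * hw1
    have h3 : w.val.2.2 = a.val.2.2 := by
      linear_combination g2 - e2 + (w.val.1 + a.val.1) * x.val.1 * hw1
    exact Prod.ext hw1 (Prod.ext h2 h3)
  have hsub : a.val.1 - w.val.1 ≠ 0 := fun hc => hw1 (by linear_combination -hc)
  have haw : a.val.1 + w.val.1 ≠ 0 := Sset_sum_ne_zero h11 a.2 w.2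
  have hxy : x.val.1 + y.val.1 ≠ 0 := Sset_sum_ne_zero h11 x.2 y.2
  -- key: subtracted equations
  have s1 : a.val.2.1 - w.val.2.1 = (a.val.1 - w.val.1) * x.val.1 ^ 2 := by
    linear_combination e1 - g1
  have s2 : a.val.2.2 - w.val.2.2 = (a.val.1 - w.val.1) * (a.val.1 + w.val.1) * x.val.1 := by
    linear_combination e2 - g2
  have s3 : b.val.2.1 - w.val.2.1 = (a.val.1 - w.val.1) * y.val.1 ^ 2 := by
    linear_combination f1 - k1 + y.val.1 ^ 2 * h1.symm
  have s4 : b.val.2.2 - w.val.2.2 = (a.val.1 - w.val.1) * (a.val.1 + w.val.1) * y.val.1 := by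
    linear_combination f2 - k2 - (a.val.1 + b.val.1) * y.val.1 * h1
  have habv : a.val ≠ b.val := fun hc => hab (Subtype.ext hc)
  constructor
  · intro heq
    -- x₁² = y₁²  ⇒ x₁ = y₁ ⇒ a₃ = b₃ ⇒ a = b
    have hsq : x.val.1 ^ 2 = y.val.1 ^ 2 :=
      mul_left_cancel₀ hsub (by linear_combination s3 - s1 + heq)
    have hx1 : x.val.1 = y.val.1 := by
      have : (x.val.1 - y.val.1) * (x.val.1 + y.val.1) = 0 := by linear_combination hsq
      rcases mul_eq_zero.1 this with h | h
      · linear_combination h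
      · exact absurd h hxy
    have h3 : a.val.2.2 = b.val.2.2 := by
      linear_combination s2 - s4 + (a.val.1 - w.val.1) * (a.val.1 + w.val.1) * hx1
    exact habv (Prod.ext h1 (Prod.ext heq h3))
  · intro h3
    have hx1 : x.val.1 = y.val.1 :=
      mul_left_cancel₀ (mul_ne_zero hsub haw) (by linear_combination s4 - s2 + h3)
    have h2 : a.val.2.1 = b.val.2.1 := by
      linear_combination s1 - s3 + (a.val.1 - w.val.1) * (x.val.1 + y.val.1) * hx1
    exact habv (Prod.ext h1 (Prod.ext h2 h3))
end

section
/- Let p be a prime with p ≡ 5 (mod 6) and p > 11. Let a = (a₁,a₂,a₃), b = (b₁,b₂,b₃), c = (c₁,c₂,c₃) be pairwise distinct vertices of G_p with a₁ = b₁ = c₁. Then the number of quadruples (x, y, z, w) of pairwise distinct vertices of G_p such that ax, xw, by, yw, cz, zw are all edges of G_p is at most 3. -/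
open SimpleGraph

/-- The set of quadruples `(x, y, z, w)` of pairwise distinct vertices of `G_p` such that
`ax, xw, by, yw, cz, zw` are all edges of `G_p`. -/
def QuadSet (p : ℕ) (a b c : Vert p) : Set (Vert p × Vert p × Vert p × Vert p) :=
  {q | q.1 ≠ q.2.1 ∧ q.1 ≠ q.2.2.1 ∧ q.1 ≠ q.2.2.2 ∧
       q.2.1 ≠ q.2.2.1 ∧ q.2.1 ≠ q.2.2.2 ∧ q.2.2.1 ≠ q.2.2.2 ∧
       (Gp p).Adj a q.1 ∧ (Gp p).Adj q.1 q.2.2.2 ∧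
       (Gp p).Adj b q.2.1 ∧ (Gp p).Adj q.2.1 q.2.2.2 ∧
       (Gp p).Adj c q.2.2.1 ∧ (Gp p).Adj q.2.2.1 q.2.2.2}

/-- The sum of two elements of `Sset p` is never zero. -/
lemma Sset_sum_ne (p : ℕ) [Fact p.Prime] (h11 : 11 < p) {v w : ZMod p}
    (hv : v ∈ Sset p) (hw : w ∈ Sset p) : v + w ≠ 0 := by
  simp only [Sset, Finset.mem_image, Finset.mem_Icc] at hv hw
  obtain ⟨k, ⟨hk1, hk2⟩, rfl⟩ := hv
  obtain ⟨l, ⟨hl1, hl2⟩, rfl⟩ := hw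
  have h : ((k + l : ℕ) : ZMod p) ≠ 0 := by
    rw [Ne, ZMod.natCast_eq_zero_iff]
    intro hdvd
    have hpos : 0 < k + l := by omega
    exact absurd (Nat.le_of_dvd hpos hdvd) (by omega)
  push_cast at h
  exact h

/-- Extraction of the basic algebraic relations for a quadruple. -/
lemma quad_eqs (p : ℕ) (a b c : Vert p)
    (h1 : a.val.1 = b.val.1) (h1' : b.val.1 = c.val.1)
    (q : Vert p × Vert p × Vert p × Vert p) (hq : q ∈ QuadSet p a b c) :
    (q.1.val.1 ^ 2 - q.2.1.val.1 ^ 2) * (q.2.2.2.val.1 - a.val.1) = b.val.2.1 - a.val.2.1 ∧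
    (q.1.val.1 - q.2.1.val.1) * (q.2.2.2.val.1 ^ 2 - a.val.1 ^ 2) = b.val.2.2 - a.val.2.2 ∧
    (q.1.val.1 ^ 2 - q.2.2.1.val.1 ^ 2) * (q.2.2.2.val.1 - a.val.1) = c.val.2.1 - a.val.2.1 ∧
    (q.1.val.1 - q.2.2.1.val.1) * (q.2.2.2.val.1 ^ 2 - a.val.1 ^ 2) = c.val.2.2 - a.val.2.2 ∧
    q.1.val.2.1 = a.val.1 ^ 2 * q.1.val.1 - a.val.2.2 ∧
    q.1.val.2.2 = a.val.1 * q.1.val.1 ^ 2 - a.val.2.1 ∧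
    q.2.1.val.2.1 = a.val.1 ^ 2 * q.2.1.val.1 - b.val.2.2 ∧
    q.2.1.val.2.2 = a.val.1 * q.2.1.val.1 ^ 2 - b.val.2.1 ∧
    q.2.2.1.val.2.1 = a.val.1 ^ 2 * q.2.2.1.val.1 - c.val.2.2 ∧
    q.2.2.1.val.2.2 = a.val.1 * q.2.2.1.val.1 ^ 2 - c.val.2.1 ∧
    q.2.2.2.val.2.1 = q.1.val.1 ^ 2 * q.2.2.2.val.1 - a.val.1 * q.1.val.1 ^ 2 + a.val.2.1 ∧
    q.2.2.2.val.2.2 = q.1.val.1 * q.2.2.2.val.1 ^ 2 - a.val.1 ^ 2 * q.1.val.1 + a.val.2.2 := by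
  obtain ⟨-, -, -, -, -, -, ⟨-, hax1, hax2⟩, ⟨-, hxw1, hxw2⟩, ⟨-, hby1, hby2⟩,
    ⟨-, hyw1, hyw2⟩, ⟨-, hcz1, hcz2⟩, ⟨-, hzw1, hzw2⟩⟩ := hq
  set t := q.1.val.1; set u := q.2.1.val.1; set s := q.2.2.1.val.1; set m := q.2.2.2.val.1
  refine ⟨?_, ?_, ?_, ?_, ?_, ?_, ?_, ?_, ?_, ?_, ?_, ?_⟩
  · linear_combination hax1 - hby1 - hxw2 + hyw2 + u ^ 2 * h1
  · linear_combination hax2 - hby2 - hxw1 + hyw1 + u * (a.val.1 + b.val.1) * h1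
  · linear_combination hax1 - hcz1 - hxw2 + hzw2 + s ^ 2 * h1 + s ^ 2 * h1'
  · linear_combination hax2 - hcz2 - hxw1 + hzw1 + s * (a.val.1 + c.val.1) * h1
      + s * (a.val.1 + c.val.1) * h1'
  · linear_combination hax2
  · linear_combination hax1
  · linear_combination hby2 - u * (a.val.1 + b.val.1) * h1
  · linear_combination hby1 - u ^ 2 * h1
  · linear_combination hcz2 - s * (a.val.1 + c.val.1) * h1 - s * (a.val.1 + c.val.1) * h1'
  · linear_combination hcz1 - s ^ 2 * h1 - s ^ 2 * h1'
  · linear_combination hxw2 - hax1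
  · linear_combination hxw1 - hax2

/-- The key algebraic consequences of the relations. -/
lemma alg_facts {F : Type*} [Field F] {α a2 a3 b2 b3 c2 c3 t u s m : F}
    (hmα : m + α ≠ 0)
    (hab : ¬(a2 = b2 ∧ a3 = b3)) (hac : ¬(a2 = c2 ∧ a3 = c3)) (hbc : ¬(b2 = c2 ∧ b3 = c3))
    (E1 : (t ^ 2 - u ^ 2) * (m - α) = b2 - a2) (E2 : (t - u) * (m ^ 2 - α ^ 2) = b3 - a3)
    (E3 : (t ^ 2 - s ^ 2) * (m - α) = c2 - a2) (E4 : (t - s) * (m ^ 2 - α ^ 2) = c3 - a3) :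
    b3 - a3 ≠ 0 ∧ m ^ 2 - α ^ 2 ≠ 0 ∧
    (b2 - a2) * (c3 - a3) - (c2 - a2) * (b3 - a3) ≠ 0 ∧
    ((b2 - a2) * (c3 - a3) - (c2 - a2) * (b3 - a3)) * (m + α) ^ 2 * (m - α)
      = (b3 - a3) * (c3 - a3) * ((c3 - a3) - (b3 - a3)) ∧
    2 * t * (b3 - a3) * (m ^ 2 - α ^ 2)
      = (b2 - a2) * (m + α) * (m ^ 2 - α ^ 2) + (b3 - a3) ^ 2 := by
  have hmne : m - α ≠ 0 := by
    intro h
    apply hab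
    have hK0 : m ^ 2 - α ^ 2 = 0 := by linear_combination (m + α) * h
    rw [h] at E1
    rw [hK0] at E2
    exact ⟨by linear_combination E1, by linear_combination E2⟩
  have hK : m ^ 2 - α ^ 2 ≠ 0 := by
    intro h
    exact mul_ne_zero hmne hmα (by linear_combination h)
  have hB : b3 - a3 ≠ 0 := by
    intro h
    apply hab
    have htu : t - u = 0 := by
      rcases mul_eq_zero.mp (E2.trans h) with h' | h'
      · exact h'
      · exact absurd h' hK
    refine ⟨by linear_combination E1 - (t + u) * (m - α) * htu, by linear_combination -h⟩
  have hC : c3 - a3 ≠ 0 := by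
    intro h
    apply hac
    have hts : t - s = 0 := by
      rcases mul_eq_zero.mp (E4.trans h) with h' | h'
      · exact h'
      · exact absurd h' hK
    refine ⟨by linear_combination E3 - (t + s) * (m - α) * hts, by linear_combination -h⟩
  have ht6 : 2 * t * (b3 - a3) * (m ^ 2 - α ^ 2)
      = (b2 - a2) * (m + α) * (m ^ 2 - α ^ 2) + (b3 - a3) ^ 2 := by
    linear_combination (m ^ 2 - α ^ 2) * (m + α) * E1 - (m ^ 2 - α ^ 2) * (t + u) * E2
      + (b3 - a3) * E2
  have hs6 : 2 * t * (c3 - a3) * (m ^ 2 - α ^ 2)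
      = (c2 - a2) * (m + α) * (m ^ 2 - α ^ 2) + (c3 - a3) ^ 2 := by
    linear_combination (m ^ 2 - α ^ 2) * (m + α) * E3 - (m ^ 2 - α ^ 2) * (t + s) * E4
      + (c3 - a3) * E4
  have hMain : ((b2 - a2) * (c3 - a3) - (c2 - a2) * (b3 - a3)) * (m + α) ^ 2 * (m - α)
      = (b3 - a3) * (c3 - a3) * ((c3 - a3) - (b3 - a3)) := by
    linear_combination (b3 - a3) * hs6 - (c3 - a3) * ht6
  have hD : (b2 - a2) * (c3 - a3) - (c2 - a2) * (b3 - a3) ≠ 0 := by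
    intro h
    apply hbc
    have h0 : (b3 - a3) * (c3 - a3) * ((c3 - a3) - (b3 - a3)) = 0 := by
      linear_combination (m + α) ^ 2 * (m - α) * h - hMain
    have hCB : (c3 - a3) - (b3 - a3) = 0 := by
      rcases mul_eq_zero.mp h0 with h' | h'
      · rcases mul_eq_zero.mp h' with h'' | h''
        · exact absurd h'' hB
        · exact absurd h'' hC
      · exact h'
    have hb2c2 : (b2 - c2) * (b3 - a3) = 0 := by
      linear_combination h - (b2 - a2) * hCB
    rcases mul_eq_zero.mp hb2c2 with h' | h'
    · exact ⟨by linear_combination h', by linear_combination -hCB⟩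
    · exact absurd h' hB
  exact ⟨hB, hK, hD, hMain, ht6⟩

/-- If moreover `a₁ = b₁ = c₁`, there are at most 3 such quadruples. -/
theorem Gp_quad_count_eq_first_all (p : ℕ) [Fact p.Prime] (h5 : p % 6 = 5) (h11 : 11 < p)
    (a b c : Vert p) (hab : a ≠ b) (hac : a ≠ c) (hbc : b ≠ c)
    (h1 : a.val.1 = b.val.1) (h1' : b.val.1 = c.val.1) :
    (QuadSet p a b c).ncard ≤ 3 := by
  classical
  rcases Set.eq_empty_or_nonempty (QuadSet p a b c) with hE | ⟨q₀, hq₀⟩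
  · simp [hE]
  have h2 : (2 : ZMod p) ≠ 0 := by
    have h2' : ((2 : ℕ) : ZMod p) ≠ 0 := by
      rw [Ne, ZMod.natCast_eq_zero_iff]
      intro h
      have := Nat.le_of_dvd (by norm_num) h
      omega
    simpa using h2'
  have hab' : ¬(a.val.2.1 = b.val.2.1 ∧ a.val.2.2 = b.val.2.2) := by
    rintro ⟨ha2, ha3⟩
    exact hab (Subtype.ext (Prod.ext h1 (Prod.ext ha2 ha3)))
  have hac' : ¬(a.val.2.1 = c.val.2.1 ∧ a.val.2.2 = c.val.2.2) := by
    rintro ⟨ha2, ha3⟩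
    exact hac (Subtype.ext (Prod.ext (h1.trans h1') (Prod.ext ha2 ha3)))
  have hbc' : ¬(b.val.2.1 = c.val.2.1 ∧ b.val.2.2 = c.val.2.2) := by
    rintro ⟨ha2, ha3⟩
    exact hbc (Subtype.ext (Prod.ext h1' (Prod.ext ha2 ha3)))
  have factsOf : ∀ q ∈ QuadSet p a b c,
      b.val.2.2 - a.val.2.2 ≠ 0 ∧ q.2.2.2.val.1 ^ 2 - a.val.1 ^ 2 ≠ 0 ∧
      (b.val.2.1 - a.val.2.1) * (c.val.2.2 - a.val.2.2)
        - (c.val.2.1 - a.val.2.1) * (b.val.2.2 - a.val.2.2) ≠ 0 ∧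
      ((b.val.2.1 - a.val.2.1) * (c.val.2.2 - a.val.2.2)
          - (c.val.2.1 - a.val.2.1) * (b.val.2.2 - a.val.2.2))
          * (q.2.2.2.val.1 + a.val.1) ^ 2 * (q.2.2.2.val.1 - a.val.1)
        = (b.val.2.2 - a.val.2.2) * (c.val.2.2 - a.val.2.2)
          * ((c.val.2.2 - a.val.2.2) - (b.val.2.2 - a.val.2.2)) ∧
      2 * q.1.val.1 * (b.val.2.2 - a.val.2.2) * (q.2.2.2.val.1 ^ 2 - a.val.1 ^ 2)
        = (b.val.2.1 - a.val.2.1) * (q.2.2.2.val.1 + a.val.1)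
            * (q.2.2.2.val.1 ^ 2 - a.val.1 ^ 2) + (b.val.2.2 - a.val.2.2) ^ 2 := by
    intro q hq
    obtain ⟨E1, E2, E3, E4, -, -, -, -, -, -, -, -⟩ := quad_eqs p a b c h1 h1' q hq
    exact alg_facts (Sset_sum_ne p h11 q.2.2.2.prop a.prop) hab' hac' hbc' E1 E2 E3 E4
  obtain ⟨-, -, hD, -, -⟩ := factsOf q₀ hq₀
  set D : ZMod p := (b.val.2.1 - a.val.2.1) * (c.val.2.2 - a.val.2.2)
    - (c.val.2.1 - a.val.2.1) * (b.val.2.2 - a.val.2.2) with hDdef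
  set E : ZMod p := (b.val.2.2 - a.val.2.2) * (c.val.2.2 - a.val.2.2)
    * ((c.val.2.2 - a.val.2.2) - (b.val.2.2 - a.val.2.2)) with hEdef
  set cub : Cubic (ZMod p) :=
    ⟨D, D * a.val.1, -(D * a.val.1 ^ 2), -(D * a.val.1 ^ 3) - E⟩ with hcubdef
  have hcub : cub.toPoly ≠ 0 := Cubic.ne_zero_of_a_ne_zero hD
  have hmaps : ∀ q ∈ QuadSet p a b c,
      q.2.2.2.val.1 ∈ (cub.roots.toFinset : Set (ZMod p)) := by
    intro q hq
    obtain ⟨-, -, -, hMain, -⟩ := factsOf q hq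
    rw [Finset.mem_coe, Multiset.mem_toFinset, Cubic.mem_roots_iff hcub]
    show D * q.2.2.2.val.1 ^ 3 + D * a.val.1 * q.2.2.2.val.1 ^ 2
      + -(D * a.val.1 ^ 2) * q.2.2.2.val.1 + (-(D * a.val.1 ^ 3) - E) = 0
    linear_combination hMain
  have hinj : Set.InjOn (fun q : Vert p × Vert p × Vert p × Vert p => q.2.2.2.val.1)
      (QuadSet p a b c) := by
    intro q hq q' hq' hm
    have hmm : q.2.2.2.val.1 = q'.2.2.2.val.1 := hm
    obtain ⟨E1, E2, E3, E4, hx2, hx3, hy2, hy3, hz2, hz3, hw2, hw3⟩ :=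
      quad_eqs p a b c h1 h1' q hq
    obtain ⟨E1', E2', E3', E4', hx2', hx3', hy2', hy3', hw2z, hw3z, hw2', hw3'⟩ :=
      quad_eqs p a b c h1 h1' q' hq'
    obtain ⟨hB, hK, -, -, ht6⟩ := factsOf q hq
    obtain ⟨-, -, -, -, ht6'⟩ := factsOf q' hq'
    rw [hmm] at hK E2 E4 ht6
    have htt : q.1.val.1 = q'.1.val.1 := by
      have hne : 2 * (b.val.2.2 - a.val.2.2) * (q'.2.2.2.val.1 ^ 2 - a.val.1 ^ 2) ≠ 0 :=
        mul_ne_zero (mul_ne_zero h2 hB) hK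
      apply mul_left_cancel₀ hne
      linear_combination ht6 - ht6'
    rw [htt] at E2 E4
    have huu : q.2.1.val.1 = q'.2.1.val.1 := by
      have h0 : (q'.2.1.val.1 - q.2.1.val.1) * (q'.2.2.2.val.1 ^ 2 - a.val.1 ^ 2) = 0 := by
        linear_combination E2 - E2'
      rcases mul_eq_zero.mp h0 with h' | h'
      · exact (sub_eq_zero.mp h').symm
      · exact absurd h' hK
    have hss : q.2.2.1.val.1 = q'.2.2.1.val.1 := by
      have h0 : (q'.2.2.1.val.1 - q.2.2.1.val.1) * (q'.2.2.2.val.1 ^ 2 - a.val.1 ^ 2) = 0 := by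
        linear_combination E4 - E4'
      rcases mul_eq_zero.mp h0 with h' | h'
      · exact (sub_eq_zero.mp h').symm
      · exact absurd h' hK
    refine Prod.ext ?_ (Prod.ext ?_ (Prod.ext ?_ ?_))
    · exact Subtype.ext (Prod.ext htt (Prod.ext
        (by rw [hx2, hx2', htt]) (by rw [hx3, hx3', htt])))
    · exact Subtype.ext (Prod.ext huu (Prod.ext
        (by rw [hy2, hy2', huu]) (by rw [hy3, hy3', huu])))
    · exact Subtype.ext (Prod.ext hss (Prod.ext
        (by rw [hz2, hw2z, hss]) (by rw [hz3, hw3z, hss])))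
    · exact Subtype.ext (Prod.ext hmm (Prod.ext
        (by rw [hw2, hw2', htt, hmm]) (by rw [hw3, hw3', htt, hmm])))
  calc (QuadSet p a b c).ncard
      = ((fun q : Vert p × Vert p × Vert p × Vert p => q.2.2.2.val.1)
          '' QuadSet p a b c).ncard := (Set.ncard_image_of_injOn hinj).symm
    _ ≤ (cub.roots.toFinset : Set (ZMod p)).ncard := by
        refine Set.ncard_le_ncard ?_ (cub.roots.toFinset.finite_toSet)
        rintro x ⟨q, hq, rfl⟩
        exact hmaps q hq
    _ = cub.roots.toFinset.card := Set.ncard_coe_finset _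
    _ ≤ 3 := Cubic.card_roots_le
end

section
/- Let p be a prime with p ≡ 5 (mod 6) and p > 11. Suppose d, a, x, w, y, b are pairwise distinct vertices of G_p such that da, ax, xw, wy, yb, bd are all edges of G_p (so these vertices form a hexagon). Then, writing v = (v₁,v₂,v₃) for each vertex v, the following identity holds in 𝔽_p: d₁²a₁ + d₁²w₁ − d₁a₁x₁ − d₁a₁y₁ + d₁x₁w₁ + d₁w₁y₁ − a₁x₁² − a₁x₁y₁ − a₁y₁² + x₁²w₁ + x₁w₁y₁ − w₁y₁² = 0. -/
open SimpleGraph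

/-- If pairwise distinct vertices `d, a, x, w, y, b` form a hexagon with edges
`da, ax, xw, wy, yb, bd`, then
`d₁²a₁ + d₁²w₁ − d₁a₁x₁ − d₁a₁y₁ + d₁x₁w₁ + d₁w₁y₁ − a₁x₁² − a₁x₁y₁ − a₁y₁² + x₁²w₁ +
x₁w₁y₁ − w₁y₁² = 0`. -/
theorem Gp_hexagon (p : ℕ) [Fact p.Prime] (h5 : p % 6 = 5) (h11 : 11 < p)
    (d a x w y b : Vert p)
    (hdist : [d, a, x, w, y, b].Pairwise (· ≠ ·))
    (eda : (Gp p).Adj d a) (eax : (Gp p).Adj a x) (exw : (Gp p).Adj x w)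
    (ewy : (Gp p).Adj w y) (eyb : (Gp p).Adj y b) (ebd : (Gp p).Adj b d) :
    d.val.1 ^ 2 * a.val.1 + d.val.1 ^ 2 * w.val.1 - d.val.1 * a.val.1 * x.val.1 -
      d.val.1 * a.val.1 * y.val.1 + d.val.1 * x.val.1 * w.val.1 +
      d.val.1 * w.val.1 * y.val.1 - a.val.1 * x.val.1 ^ 2 -
      a.val.1 * x.val.1 * y.val.1 - a.val.1 * y.val.1 ^ 2 + x.val.1 ^ 2 * w.val.1 +
      x.val.1 * w.val.1 * y.val.1 - w.val.1 * y.val.1 ^ 2 = 0 := by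
  obtain ⟨hda1, hda2⟩ := eda.2
  obtain ⟨hax1, hax2⟩ := eax.2
  obtain ⟨hxw1, hxw2⟩ := exw.2
  obtain ⟨hwy1, hwy2⟩ := ewy.2
  obtain ⟨hyb1, hyb2⟩ := eyb.2
  obtain ⟨hbd1, hbd2⟩ := ebd.2
  simp only [List.pairwise_cons, List.mem_cons, List.mem_singleton,
    List.not_mem_nil, forall_eq_or_imp, forall_eq] at hdist
  have hdx : d ≠ x := hdist.1.2.1
  have haw : a ≠ w := hdist.2.1.2.1
  have hxy : x ≠ y := hdist.2.2.1.2.1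
  have hdx1 : d.val.1 - x.val.1 ≠ 0 := by
    intro h
    apply hdx
    have h1 : d.val.1 = x.val.1 := by linear_combination h
    refine Subtype.ext (Prod.ext h1 (Prod.ext ?_ ?_))
    · linear_combination hda1 - hax2 + a.val.1 ^ 2 * h
    · linear_combination hda2 - hax1 + (a.val.1 * d.val.1 + a.val.1 * x.val.1) * h
  have haw1 : a.val.1 - w.val.1 ≠ 0 := by
    intro h
    apply haw
    have h1 : a.val.1 = w.val.1 := by linear_combination h
    refine Subtype.ext (Prod.ext h1 (Prod.ext ?_ ?_))
    · linear_combination hax1 - hxw2 + x.val.1 ^ 2 * h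
    · linear_combination hax2 - hxw1 + (x.val.1 * a.val.1 + x.val.1 * w.val.1) * h
  have hxy1 : x.val.1 - y.val.1 ≠ 0 := by
    intro h
    apply hxy
    have h1 : x.val.1 = y.val.1 := by linear_combination h
    refine Subtype.ext (Prod.ext h1 (Prod.ext ?_ ?_))
    · linear_combination hxw1 - hwy2 + w.val.1 ^ 2 * h
    · linear_combination hxw2 - hwy1 + (w.val.1 * x.val.1 + w.val.1 * y.val.1) * h
  have hE1 : a.val.1 ^ 2 * (x.val.1 - d.val.1) + w.val.1 ^ 2 * (y.val.1 - x.val.1)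
      = b.val.1 ^ 2 * (y.val.1 - d.val.1) := by
    linear_combination hda1 - hax2 + hxw1 - hwy2 + hyb1 - hbd2
  have hE2 : a.val.1 * (x.val.1 ^ 2 - d.val.1 ^ 2) + w.val.1 * (y.val.1 ^ 2 - x.val.1 ^ 2)
      = b.val.1 * (y.val.1 ^ 2 - d.val.1 ^ 2) := by
    linear_combination hda2 - hax1 + hxw2 - hwy1 + hyb2 - hbd1
  have hprod : (d.val.1 ^ 2 * a.val.1 + d.val.1 ^ 2 * w.val.1 - d.val.1 * a.val.1 * x.val.1 -
      d.val.1 * a.val.1 * y.val.1 + d.val.1 * x.val.1 * w.val.1 +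
      d.val.1 * w.val.1 * y.val.1 - a.val.1 * x.val.1 ^ 2 -
      a.val.1 * x.val.1 * y.val.1 - a.val.1 * y.val.1 ^ 2 + x.val.1 ^ 2 * w.val.1 +
      x.val.1 * w.val.1 * y.val.1 - w.val.1 * y.val.1 ^ 2) *
      ((d.val.1 - x.val.1) * (a.val.1 - w.val.1) * (x.val.1 - y.val.1)) = 0 := by
    linear_combination
      (a.val.1 * (x.val.1 ^ 2 - d.val.1 ^ 2) + w.val.1 * (y.val.1 ^ 2 - x.val.1 ^ 2)
        + b.val.1 * (y.val.1 ^ 2 - d.val.1 ^ 2)) * hE2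
      - (y.val.1 - d.val.1) * (y.val.1 + d.val.1) ^ 2 * hE1
  rcases mul_eq_zero.mp hprod with h | h
  · exact h
  · exact absurd h (by
      exact mul_ne_zero (mul_ne_zero hdx1 haw1) hxy1)
end

section
/- Let p be a prime with p ≡ 5 (mod 6) and p > 11. Let a = (a₁,a₂,a₃), b = (b₁,b₂,b₃), c = (c₁,c₂,c₃) be pairwise distinct vertices of G_p such that a₁, b₁, c₁ are pairwise distinct. Then the number of quadruples (x, y, z, w) of pairwise distinct vertices of G_p such that ax, xw, by, yw, cz, zw are all edges of G_p and the first coordinate of w satisfies w₁ = a₁ + b₁ + c₁ is at most 2. -/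
open SimpleGraph

section Aux

lemma myCastNeZero {p : ℕ} [Fact p.Prime] {n : ℕ} (h1 : 0 < n) (h2 : n < p) :
    (n : ZMod p) ≠ 0 := by
  intro h
  rw [ZMod.natCast_eq_zero_iff] at h
  exact absurd (Nat.le_of_dvd h1 h) (not_le.mpr h2)

lemma Sset_spec {p : ℕ} {x : ZMod p} (hx : x ∈ Sset p) :
    ∃ k : ℕ, 1 ≤ k ∧ k ≤ (p - 5) / 6 ∧ (k : ZMod p) = x := by
  simp only [Sset, Finset.mem_image, Finset.mem_Icc] at hx
  obtain ⟨k, ⟨h1, h2⟩, h3⟩ := hx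
  exact ⟨k, h1, h2, h3⟩

lemma gp_adj {p : ℕ} {x y : Vert p} (h : (Gp p).Adj x y) :
    x.val.2.1 + y.val.2.2 = x.val.1 * y.val.1 ^ 2 ∧
    x.val.2.2 + y.val.2.1 = x.val.1 ^ 2 * y.val.1 := h.2

lemma relAux {F : Type*} [Field F] {a1 a2 a3 x1 x2 x3 s w2 w3 : F}
    (h1 : a2 + x3 = a1 * x1 ^ 2) (h2 : a3 + x2 = a1 ^ 2 * x1)
    (h3 : x2 + w3 = x1 * s ^ 2) (h4 : x3 + w2 = x1 ^ 2 * s) :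
    x1 * (a1 ^ 2 - s ^ 2) = a3 - w3 ∧
    (a3 - w3) ^ 2 = (a2 - w2) * ((a1 - s) * (a1 + s) ^ 2) := by
  have e1 : x1 * (a1 ^ 2 - s ^ 2) = a3 - w3 := by linear_combination h3 - h2
  have e2 : x1 ^ 2 * (a1 - s) = a2 - w2 := by linear_combination h4 - h1
  refine ⟨e1, ?_⟩
  linear_combination (-(a3 - w3) - x1 * (a1 ^ 2 - s ^ 2)) * e1 + (a1 - s) * (a1 + s) ^ 2 * e2

lemma pairRel {F : Type*} [Field F] {αa αb a2 a3 b2 b3 u v u' v' : F}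
    (h1 : (a3 - v) ^ 2 = (a2 - u) * αa) (h2 : (b3 - v) ^ 2 = (b2 - u) * αb)
    (h1' : (a3 - v') ^ 2 = (a2 - u') * αa) (h2' : (b3 - v') ^ 2 = (b2 - u') * αb)
    (hvv : v ≠ v') :
    (αb - αa) * (v + v') = 2 * (αb * a3 - αa * b3) := by
  have hv := sub_ne_zero.mpr hvv
  have key : (v - v') * ((αb - αa) * (v + v') - 2 * (αb * a3 - αa * b3)) = 0 := by
    linear_combination αb * (h1 - h1') - αa * (h2 - h2')
  rcases mul_eq_zero.mp key with h | h
  · exact absurd h hv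
  · exact sub_eq_zero.mp h

end Aux

/-- If `a₁, b₁, c₁` are pairwise distinct, there are at most 2 such quadruples
`(x, y, z, w)` with `w₁ = a₁ + b₁ + c₁`. -/
theorem Gp_quad_count_w_eq_sum (p : ℕ) [Fact p.Prime] (h5 : p % 6 = 5) (h11 : 11 < p)
    (a b c : Vert p) (hab : a ≠ b) (hac : a ≠ c) (hbc : b ≠ c)
    (h1ab : a.val.1 ≠ b.val.1) (h1ac : a.val.1 ≠ c.val.1) (h1bc : b.val.1 ≠ c.val.1) :
    {q ∈ QuadSet p a b c | q.2.2.2.val.1 = a.val.1 + b.val.1 + c.val.1}.ncard ≤ 2 := by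
  classical
  haveI : NeZero p := ⟨(Fact.out : p.Prime).ne_zero⟩
  obtain ⟨ka, hka1, hka2, hka⟩ := Sset_spec a.property
  obtain ⟨kb, hkb1, hkb2, hkb⟩ := Sset_spec b.property
  obtain ⟨kc, hkc1, hkc2, hkc⟩ := Sset_spec c.property
  have h20 : (2 : ZMod p) ≠ 0 := by
    have h := myCastNeZero (p := p) (n := 2) (by norm_num) (by omega)
    simpa using h
  have hS0 : a.val.1 + b.val.1 + c.val.1 ≠ 0 := by
    have e : ((ka + kb + kc : ℕ) : ZMod p) = a.val.1 + b.val.1 + c.val.1 := by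
      push_cast [hka, hkb, hkc]; ring
    rw [← e]; exact myCastNeZero (by omega) (by omega)
  have hbc0 : b.val.1 + c.val.1 ≠ 0 := by
    have e : ((kb + kc : ℕ) : ZMod p) = b.val.1 + c.val.1 := by
      push_cast [hkb, hkc]; ring
    rw [← e]; exact myCastNeZero (by omega) (by omega)
  have hac0 : a.val.1 + c.val.1 ≠ 0 := by
    have e : ((ka + kc : ℕ) : ZMod p) = a.val.1 + c.val.1 := by
      push_cast [hka, hkc]; ring
    rw [← e]; exact myCastNeZero (by omega) (by omega)
  have hab0 : a.val.1 + b.val.1 ≠ 0 := by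
    have e : ((ka + kb : ℕ) : ZMod p) = a.val.1 + b.val.1 := by
      push_cast [hka, hkb]; ring
    rw [← e]; exact myCastNeZero (by omega) (by omega)
  have hea : a.val.1 + (a.val.1 + b.val.1 + c.val.1) ≠ 0 := by
    have e : ((2 * ka + kb + kc : ℕ) : ZMod p) = a.val.1 + (a.val.1 + b.val.1 + c.val.1) := by
      push_cast [hka, hkb, hkc]; ring
    rw [← e]; exact myCastNeZero (by omega) (by omega)
  have heb : b.val.1 + (a.val.1 + b.val.1 + c.val.1) ≠ 0 := by
    have e : ((ka + 2 * kb + kc : ℕ) : ZMod p) = b.val.1 + (a.val.1 + b.val.1 + c.val.1) := by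
      push_cast [hka, hkb, hkc]; ring
    rw [← e]; exact myCastNeZero (by omega) (by omega)
  have hec : c.val.1 + (a.val.1 + b.val.1 + c.val.1) ≠ 0 := by
    have e : ((ka + kb + 2 * kc : ℕ) : ZMod p) = c.val.1 + (a.val.1 + b.val.1 + c.val.1) := by
      push_cast [hka, hkb, hkc]; ring
    rw [← e]; exact myCastNeZero (by omega) (by omega)
  have hda : a.val.1 - (a.val.1 + b.val.1 + c.val.1) ≠ 0 :=
    fun h => hbc0 (by linear_combination -h)
  have hdb : b.val.1 - (a.val.1 + b.val.1 + c.val.1) ≠ 0 :=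
    fun h => hac0 (by linear_combination -h)
  have hdc : c.val.1 - (a.val.1 + b.val.1 + c.val.1) ≠ 0 :=
    fun h => hab0 (by linear_combination -h)
  have hAa : (a.val.1 - (a.val.1 + b.val.1 + c.val.1)) *
      (a.val.1 + (a.val.1 + b.val.1 + c.val.1)) ^ 2 ≠ 0 :=
    mul_ne_zero hda (pow_ne_zero 2 hea)
  have hAb : (b.val.1 - (a.val.1 + b.val.1 + c.val.1)) *
      (b.val.1 + (a.val.1 + b.val.1 + c.val.1)) ^ 2 ≠ 0 :=
    mul_ne_zero hdb (pow_ne_zero 2 heb)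
  have hAc : (c.val.1 - (a.val.1 + b.val.1 + c.val.1)) *
      (c.val.1 + (a.val.1 + b.val.1 + c.val.1)) ^ 2 ≠ 0 :=
    mul_ne_zero hdc (pow_ne_zero 2 hec)
  have hDa : a.val.1 ^ 2 - (a.val.1 + b.val.1 + c.val.1) ^ 2 ≠ 0 :=
    fun h => mul_ne_zero hda hea (by linear_combination h)
  have hDb : b.val.1 ^ 2 - (a.val.1 + b.val.1 + c.val.1) ^ 2 ≠ 0 :=
    fun h => mul_ne_zero hdb heb (by linear_combination h)
  have hDc : c.val.1 ^ 2 - (a.val.1 + b.val.1 + c.val.1) ^ 2 ≠ 0 :=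
    fun h => mul_ne_zero hdc hec (by linear_combination h)
  -- the key relations for any member of the set
  have extract : ∀ q, q ∈ {q ∈ QuadSet p a b c | q.2.2.2.val.1 = a.val.1 + b.val.1 + c.val.1} →
      ((a.val.2.2 - q.2.2.2.val.2.2) ^ 2 = (a.val.2.1 - q.2.2.2.val.2.1) *
        ((a.val.1 - (a.val.1 + b.val.1 + c.val.1)) * (a.val.1 + (a.val.1 + b.val.1 + c.val.1)) ^ 2)) ∧
      ((b.val.2.2 - q.2.2.2.val.2.2) ^ 2 = (b.val.2.1 - q.2.2.2.val.2.1) *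
        ((b.val.1 - (a.val.1 + b.val.1 + c.val.1)) * (b.val.1 + (a.val.1 + b.val.1 + c.val.1)) ^ 2)) ∧
      ((c.val.2.2 - q.2.2.2.val.2.2) ^ 2 = (c.val.2.1 - q.2.2.2.val.2.1) *
        ((c.val.1 - (a.val.1 + b.val.1 + c.val.1)) * (c.val.1 + (a.val.1 + b.val.1 + c.val.1)) ^ 2)) := by
    intro q hq
    obtain ⟨hQ, hw1⟩ := hq
    simp only [QuadSet, Set.mem_setOf_eq] at hQ
    obtain ⟨-, -, -, -, -, -, hax, hxw, hby, hyw, hcz, hzw⟩ := hQ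
    obtain ⟨ha1, ha2⟩ := gp_adj hax
    obtain ⟨hx1, hx2⟩ := gp_adj hxw
    obtain ⟨hb1, hb2⟩ := gp_adj hby
    obtain ⟨hy1, hy2⟩ := gp_adj hyw
    obtain ⟨hc1, hc2⟩ := gp_adj hcz
    obtain ⟨hz1, hz2⟩ := gp_adj hzw
    rw [hw1] at hx1 hx2 hy1 hy2 hz1 hz2
    exact ⟨(relAux ha1 ha2 hx1 hx2).2, (relAux hb1 hb2 hy1 hy2).2, (relAux hc1 hc2 hz1 hz2).2⟩
  -- a member is determined by the last coordinate of w
  have inj : ∀ q, q ∈ {q ∈ QuadSet p a b c | q.2.2.2.val.1 = a.val.1 + b.val.1 + c.val.1} →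
      ∀ q', q' ∈ {q ∈ QuadSet p a b c | q.2.2.2.val.1 = a.val.1 + b.val.1 + c.val.1} →
      q.2.2.2.val.2.2 = q'.2.2.2.val.2.2 → q = q' := by
    intro q hq q' hq' hv
    have Ra := (extract q hq).1
    have Ra' := (extract q' hq').1
    obtain ⟨hQ, hw1⟩ := hq
    obtain ⟨hQ', hw1'⟩ := hq'
    simp only [QuadSet, Set.mem_setOf_eq] at hQ hQ'
    obtain ⟨-, -, -, -, -, -, hax, hxw, hby, hyw, hcz, hzw⟩ := hQ
    obtain ⟨-, -, -, -, -, -, hax', hxw', hby', hyw', hcz', hzw'⟩ := hQ'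
    obtain ⟨ha1, ha2⟩ := gp_adj hax
    obtain ⟨hx1, hx2⟩ := gp_adj hxw
    obtain ⟨hb1, hb2⟩ := gp_adj hby
    obtain ⟨hy1, hy2⟩ := gp_adj hyw
    obtain ⟨hc1, hc2⟩ := gp_adj hcz
    obtain ⟨hz1, hz2⟩ := gp_adj hzw
    obtain ⟨ha1', ha2'⟩ := gp_adj hax'
    obtain ⟨hx1', hx2'⟩ := gp_adj hxw'
    obtain ⟨hb1', hb2'⟩ := gp_adj hby'
    obtain ⟨hy1', hy2'⟩ := gp_adj hyw'
    obtain ⟨hc1', hc2'⟩ := gp_adj hcz'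
    obtain ⟨hz1', hz2'⟩ := gp_adj hzw'
    rw [hw1] at hx1 hx2 hy1 hy2 hz1 hz2
    rw [hw1'] at hx1' hx2' hy1' hy2' hz1' hz2'
    -- w₂ is determined
    have hu : q.2.2.2.val.2.1 = q'.2.2.2.val.2.1 := by
      have hmm : (a.val.2.1 - q.2.2.2.val.2.1) *
          ((a.val.1 - (a.val.1 + b.val.1 + c.val.1)) *
            (a.val.1 + (a.val.1 + b.val.1 + c.val.1)) ^ 2) =
          (a.val.2.1 - q'.2.2.2.val.2.1) *
          ((a.val.1 - (a.val.1 + b.val.1 + c.val.1)) *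
            (a.val.1 + (a.val.1 + b.val.1 + c.val.1)) ^ 2) := by
        rw [← Ra, ← Ra', hv]
      have h2 := mul_right_cancel₀ hAa hmm
      linear_combination -h2
    have hw : q.2.2.2 = q'.2.2.2 :=
      Subtype.ext (Prod.ext (hw1.trans hw1'.symm) (Prod.ext hu hv))
    -- x is determined
    have ex := (relAux ha1 ha2 hx1 hx2).1
    have ex' := (relAux ha1' ha2' hx1' hx2').1
    have hxx : q.1.val.1 = q'.1.val.1 := mul_right_cancel₀ hDa (by rw [ex, ex', hv])
    have hx2e : q.1.val.2.1 = q'.1.val.2.1 := by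
      linear_combination hx1 - hx1' + (a.val.1 + b.val.1 + c.val.1) ^ 2 * hxx - hv
    have hx3e : q.1.val.2.2 = q'.1.val.2.2 := by
      linear_combination ha1 - ha1' + a.val.1 * (q.1.val.1 + q'.1.val.1) * hxx
    have hx : q.1 = q'.1 := Subtype.ext (Prod.ext hxx (Prod.ext hx2e hx3e))
    -- y is determined
    have ey := (relAux hb1 hb2 hy1 hy2).1
    have ey' := (relAux hb1' hb2' hy1' hy2').1
    have hyy : q.2.1.val.1 = q'.2.1.val.1 := mul_right_cancel₀ hDb (by rw [ey, ey', hv])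
    have hy2e : q.2.1.val.2.1 = q'.2.1.val.2.1 := by
      linear_combination hy1 - hy1' + (a.val.1 + b.val.1 + c.val.1) ^ 2 * hyy - hv
    have hy3e : q.2.1.val.2.2 = q'.2.1.val.2.2 := by
      linear_combination hb1 - hb1' + b.val.1 * (q.2.1.val.1 + q'.2.1.val.1) * hyy
    have hy : q.2.1 = q'.2.1 := Subtype.ext (Prod.ext hyy (Prod.ext hy2e hy3e))
    -- z is determined
    have ez := (relAux hc1 hc2 hz1 hz2).1
    have ez' := (relAux hc1' hc2' hz1' hz2').1
    have hzz : q.2.2.1.val.1 = q'.2.2.1.val.1 := mul_right_cancel₀ hDc (by rw [ez, ez', hv])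
    have hz2e : q.2.2.1.val.2.1 = q'.2.2.1.val.2.1 := by
      linear_combination hz1 - hz1' + (a.val.1 + b.val.1 + c.val.1) ^ 2 * hzz - hv
    have hz3e : q.2.2.1.val.2.2 = q'.2.2.1.val.2.2 := by
      linear_combination hc1 - hc1' + c.val.1 * (q.2.2.1.val.1 + q'.2.2.1.val.1) * hzz
    have hz : q.2.2.1 = q'.2.2.1 := Subtype.ext (Prod.ext hzz (Prod.ext hz2e hz3e))
    exact Prod.ext hx (Prod.ext hy (Prod.ext hz hw))
  -- main argument
  by_contra hcon
  push_neg at hcon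
  rw [Set.two_lt_ncard (Set.toFinite _)] at hcon
  obtain ⟨q0, hq0, q1, hq1, q2, hq2, h01, h02, h12⟩ := hcon
  have hv01 : q0.2.2.2.val.2.2 ≠ q1.2.2.2.val.2.2 := fun h => h01 (inj _ hq0 _ hq1 h)
  have hv02 : q0.2.2.2.val.2.2 ≠ q2.2.2.2.val.2.2 := fun h => h02 (inj _ hq0 _ hq2 h)
  have hv12 : q1.2.2.2.val.2.2 ≠ q2.2.2.2.val.2.2 := fun h => h12 (inj _ hq1 _ hq2 h)
  obtain ⟨Ra0, Rb0, Rc0⟩ := extract q0 hq0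
  obtain ⟨Ra1, Rb1, Rc1⟩ := extract q1 hq1
  obtain ⟨Ra2, Rb2, Rc2⟩ := extract q2 hq2
  have E01ab := pairRel Ra0 Rb0 Ra1 Rb1 hv01
  have E02ab := pairRel Ra0 Rb0 Ra2 Rb2 hv02
  have hzab : ((b.val.1 - (a.val.1 + b.val.1 + c.val.1)) *
      (b.val.1 + (a.val.1 + b.val.1 + c.val.1)) ^ 2 -
      (a.val.1 - (a.val.1 + b.val.1 + c.val.1)) *
      (a.val.1 + (a.val.1 + b.val.1 + c.val.1)) ^ 2) *
      (q1.2.2.2.val.2.2 - q2.2.2.2.val.2.2) = 0 := by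
    linear_combination E01ab - E02ab
  have hαab : (b.val.1 - (a.val.1 + b.val.1 + c.val.1)) *
      (b.val.1 + (a.val.1 + b.val.1 + c.val.1)) ^ 2 =
      (a.val.1 - (a.val.1 + b.val.1 + c.val.1)) *
      (a.val.1 + (a.val.1 + b.val.1 + c.val.1)) ^ 2 := by
    rcases mul_eq_zero.mp hzab with h | h
    · exact sub_eq_zero.mp h
    · exact absurd (sub_eq_zero.mp h) hv12
  have E01ac := pairRel Ra0 Rc0 Ra1 Rc1 hv01
  have E02ac := pairRel Ra0 Rc0 Ra2 Rc2 hv02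
  have hzac : ((c.val.1 - (a.val.1 + b.val.1 + c.val.1)) *
      (c.val.1 + (a.val.1 + b.val.1 + c.val.1)) ^ 2 -
      (a.val.1 - (a.val.1 + b.val.1 + c.val.1)) *
      (a.val.1 + (a.val.1 + b.val.1 + c.val.1)) ^ 2) *
      (q1.2.2.2.val.2.2 - q2.2.2.2.val.2.2) = 0 := by
    linear_combination E01ac - E02ac
  have hαac : (c.val.1 - (a.val.1 + b.val.1 + c.val.1)) *
      (c.val.1 + (a.val.1 + b.val.1 + c.val.1)) ^ 2 =
      (a.val.1 - (a.val.1 + b.val.1 + c.val.1)) *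
      (a.val.1 + (a.val.1 + b.val.1 + c.val.1)) ^ 2 := by
    rcases mul_eq_zero.mp hzac with h | h
    · exact sub_eq_zero.mp h
    · exact absurd (sub_eq_zero.mp h) hv12
  -- derive the contradiction
  have key1 : (a.val.1 - b.val.1) * (a.val.1 ^ 2 + a.val.1 * b.val.1 + b.val.1 ^ 2 +
      (a.val.1 + b.val.1 + c.val.1) * (a.val.1 + b.val.1) -
      (a.val.1 + b.val.1 + c.val.1) ^ 2) = 0 := by
    linear_combination -hαab
  have hPab : a.val.1 ^ 2 + a.val.1 * b.val.1 + b.val.1 ^ 2 +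
      (a.val.1 + b.val.1 + c.val.1) * (a.val.1 + b.val.1) -
      (a.val.1 + b.val.1 + c.val.1) ^ 2 = 0 := by
    rcases mul_eq_zero.mp key1 with h | h
    · exact absurd h (sub_ne_zero.mpr h1ab)
    · exact h
  have key2 : (a.val.1 - c.val.1) * (a.val.1 ^ 2 + a.val.1 * c.val.1 + c.val.1 ^ 2 +
      (a.val.1 + b.val.1 + c.val.1) * (a.val.1 + c.val.1) -
      (a.val.1 + b.val.1 + c.val.1) ^ 2) = 0 := by
    linear_combination -hαac
  have hPac : a.val.1 ^ 2 + a.val.1 * c.val.1 + c.val.1 ^ 2 +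
      (a.val.1 + b.val.1 + c.val.1) * (a.val.1 + c.val.1) -
      (a.val.1 + b.val.1 + c.val.1) ^ 2 = 0 := by
    rcases mul_eq_zero.mp key2 with h | h
    · exact absurd h (sub_ne_zero.mpr h1ac)
    · exact h
  have hfin : 2 * (a.val.1 + b.val.1 + c.val.1) * (b.val.1 - c.val.1) = 0 := by
    linear_combination hPab - hPac
  exact absurd hfin (mul_ne_zero (mul_ne_zero h20 hS0) (sub_ne_zero.mpr h1bc))
end
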